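/- Let D = d·ℓ² with d a fundamental discriminant, ℓ > 0, and D not a perfect square. Then L(1, ψ_D) = L(1, ψ_d) · (1/ℓ) · ∏_{p | ℓ} [1 + (p - ψ_d(p)) · (p^{ord_p ℓ} - 1)/(p - 1)]. -/

import Mathlib

/-- A fundamental discriminant. -/
def IsFundamentalDiscriminant (d : ℤ) : Prop :=
  (d % 4 = 1 ∧ Squarefree d ∧ d ≠ 1) ∨
    (d % 4 = 0 ∧ Squarefree (d / 4) ∧ (d / 4) % 4 ≠ 1)

/-- The Kronecker symbol `(d | p)` at a prime `p`. -/
noncomputable def kroneckerAtPrime (d : ℤ) (p : ℕ) : ℤ :=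
  if p = 2 then
    (if d % 8 = 1 ∨ d % 8 = 7 then 1 else if d % 8 = 3 ∨ d % 8 = 5 then -1 else 0)
  else if h : p.Prime then @legendreSym p ⟨h⟩ d else 0

/-- The Kronecker symbol `(d | n)` for `n ≥ 1`, extended completely multiplicatively
from its values at primes. -/
noncomputable def kronecker (d : ℤ) (n : ℕ) : ℤ :=
  n.factorization.prod fun p k => (kroneckerAtPrime d p) ^ k

open Finset ArithmeticFunction Filter
open scoped ArithmeticFunction.zeta

lemma kronecker_one (d : ℤ) : kronecker d 1 = 1 := by simp [kronecker]

lemma kronecker_prime_pow (d : ℤ) {p : ℕ} (hp : p.Prime) (k : ℕ) :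
    kronecker d (p ^ k) = (kronecker d p) ^ k := by
  unfold kronecker
  rw [hp.factorization_pow, hp.factorization, Finsupp.prod_single_index (by simp),
    Finsupp.prod_single_index (by simp), pow_one]

lemma kronecker_mul (d : ℤ) {m n : ℕ} (hm : m ≠ 0) (hn : n ≠ 0) :
    kronecker d (m * n) = kronecker d m * kronecker d n := by
  unfold kronecker
  rw [Nat.factorization_mul hm hn,
    Finsupp.prod_add_index' (fun p => pow_zero _) (fun p k1 k2 => pow_add _ _ _)]

noncomputable def chiF (d : ℤ) : ArithmeticFunction ℂ :=
  ⟨fun n => if n = 0 then 0 else (kronecker d n : ℂ), by simp⟩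

noncomputable def hF (d : ℤ) : ArithmeticFunction ℂ :=
  ⟨fun n => if n = 0 then 0 else ∏ p ∈ n.primeFactors, (1 - (kronecker d p : ℂ)), by simp⟩

lemma chiF_apply (d : ℤ) {n : ℕ} (hn : n ≠ 0) : chiF d n = (kronecker d n : ℂ) := if_neg hn

lemma hF_apply (d : ℤ) {n : ℕ} (hn : n ≠ 0) :
    hF d n = ∏ p ∈ n.primeFactors, (1 - (kronecker d p : ℂ)) := if_neg hn

lemma chiF_mult (d : ℤ) : IsMultiplicative (chiF d) := by
  rw [ArithmeticFunction.IsMultiplicative.iff_ne_zero]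
  refine ⟨by simp [chiF_apply d one_ne_zero, kronecker_one], fun {m n} hm hn _ => ?_⟩
  rw [chiF_apply d (Nat.mul_ne_zero hm hn), chiF_apply d hm, chiF_apply d hn,
    kronecker_mul d hm hn]
  push_cast; ring

lemma hF_mult (d : ℤ) : IsMultiplicative (hF d) := by
  rw [ArithmeticFunction.IsMultiplicative.iff_ne_zero]
  refine ⟨by simp [hF_apply d one_ne_zero], fun {m n} hm hn hcop => ?_⟩
  rw [hF_apply d (Nat.mul_ne_zero hm hn), hF_apply d hm, hF_apply d hn,
    Nat.Coprime.primeFactors_mul hcop,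
    Finset.prod_union (Nat.Coprime.disjoint_primeFactors hcop)]

lemma conv_eq (d : ℤ) : hF d * chiF d = (ζ : ArithmeticFunction ℂ) := by
  rw [ArithmeticFunction.IsMultiplicative.eq_iff_eq_on_prime_powers _ ((hF_mult d).mul (chiF_mult d)) _
    isMultiplicative_zeta.natCast]
  intro p i hp
  have hp0 : p ≠ 0 := hp.ne_zero
  rw [mul_apply, Nat.sum_divisorsAntidiagonal (fun a b => hF d a * chiF d b),
    Nat.sum_divisors_prime_pow hp]
  have hpi : ∀ x ≤ i, (p ^ i) / (p ^ x) = p ^ (i - x) := fun x hx =>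
    Nat.pow_div hx hp.pos
  have hterm : ∀ x ∈ range (i + 1), hF d (p ^ x) * chiF d ((p ^ i) / (p ^ x)) =
      (if x = 0 then 1 else 1 - (kronecker d p : ℂ)) * (kronecker d p : ℂ) ^ (i - x) := by
    intro x hx
    rw [mem_range, Nat.lt_succ_iff] at hx
    rw [hpi x hx, chiF_apply d (pow_ne_zero _ hp0), kronecker_prime_pow d hp, hF_apply d (pow_ne_zero _ hp0)]
    rw [Int.cast_pow]
    congr 1
    rcases Nat.eq_zero_or_pos x with rfl | hx0
    · simp
    · rw [if_neg hx0.ne', Nat.primeFactors_pow _ hx0.ne', hp.primeFactors, Finset.prod_singleton]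
  rw [Finset.sum_congr rfl hterm, Finset.sum_range_succ']
  push_cast
  simp only [if_neg (Nat.succ_ne_zero _), if_pos rfl, Nat.sub_zero, one_mul]
  set c : ℂ := (kronecker d p : ℂ)
  have : ∑ x ∈ range i, (1 - c) * c ^ (i - (x + 1)) = (1 - c) * ∑ x ∈ range i, c ^ x := by
    rw [Finset.mul_sum, ← Finset.sum_range_reflect (fun x => (1 - c) * c ^ x) i]
    exact Finset.sum_congr rfl fun x hx => by
      rw [mem_range] at hx; congr 2; omega
  rw [this]
  have hg := geom_sum_mul c i
  rw [natCoe_apply, zeta_apply_ne (pow_ne_zero i hp0)]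
  push_cast
  linear_combination -hg

lemma psiD_eq (d : ℤ) (ℓ : ℕ) {n : ℕ} (hn : n ≠ 0) :
    (kronecker d (n / n.gcd ℓ) : ℂ) = ∑ a ∈ (n.gcd ℓ).divisors, hF d a * chiF d (n / a) := by
  set g := n.gcd ℓ with hg
  have hg0 : g ≠ 0 := fun h => hn (Nat.eq_zero_of_gcd_eq_zero_left h)
  have hgn : g ∣ n := Nat.gcd_dvd_left n ℓ
  have hng0 : n / g ≠ 0 := Nat.div_ne_zero_iff_of_dvd hgn |>.mpr ⟨hn, hg0⟩
  have key : ∀ a ∈ g.divisors, hF d a * chiF d (n / a) =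
      chiF d (n / g) * (hF d a * chiF d (g / a)) := by
    intro a ha
    rw [Nat.mem_divisors] at ha
    obtain ⟨hag, -⟩ := ha
    have ha0 : a ≠ 0 := fun h => hg0 (by simpa [h] using hag)
    have hga0 : g / a ≠ 0 := Nat.div_ne_zero_iff_of_dvd hag |>.mpr ⟨hg0, ha0⟩
    have h1 : n / a = (n / g) * (g / a) := by
      rw [Nat.div_mul_div_comm hgn hag, Nat.mul_comm n g,
        Nat.mul_div_mul_left _ _ (Nat.pos_of_ne_zero hg0)]
    rw [h1, chiF_apply d (Nat.mul_ne_zero hng0 hga0), kronecker_mul d hng0 hga0,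
      chiF_apply d hng0, chiF_apply d hga0]
    push_cast; ring
  rw [Finset.sum_congr rfl key, ← Finset.mul_sum]
  have h2 : ∑ a ∈ g.divisors, hF d a * chiF d (g / a) = (hF d * chiF d) g := by
    rw [mul_apply, Nat.sum_divisorsAntidiagonal (fun a b => hF d a * chiF d b)]
  rw [h2, conv_eq, natCoe_apply, zeta_apply_ne hg0, chiF_apply d hng0]
  push_cast; ring

lemma partial_sum_eq (d : ℤ) {ℓ : ℕ} (hℓ : ℓ ≠ 0) (M : ℕ) :
    ∑ n ∈ Finset.Icc 1 M, (kronecker d (n / n.gcd ℓ) : ℂ) / n =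
      ∑ a ∈ ℓ.divisors, (hF d a / a) * ∑ b ∈ Finset.Icc 1 (M / a), (kronecker d b : ℂ) / b := by
  have step1 : ∀ n ∈ Finset.Icc 1 M, (kronecker d (n / n.gcd ℓ) : ℂ) / n =
      ∑ a ∈ ℓ.divisors, (if a ∣ n then hF d a * chiF d (n / a) / n else 0) := by
    intro n hn
    rw [Finset.mem_Icc] at hn
    have hn0 : n ≠ 0 := by omega
    rw [psiD_eq d ℓ hn0, Finset.sum_div, ← Finset.sum_filter]
    apply Finset.sum_congr
    · ext a
      simp only [Nat.mem_divisors, Finset.mem_filter]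
      constructor
      · rintro ⟨hag, -⟩
        exact ⟨⟨hag.trans (Nat.gcd_dvd_right n ℓ), hℓ⟩, hag.trans (Nat.gcd_dvd_left n ℓ)⟩
      · rintro ⟨⟨haℓ, -⟩, han⟩
        exact ⟨Nat.dvd_gcd han haℓ, fun h => hn0 (Nat.eq_zero_of_gcd_eq_zero_left h)⟩
    · intro a _; rfl
  rw [Finset.sum_congr rfl step1, Finset.sum_comm]
  apply Finset.sum_congr rfl
  intro a ha
  rw [Nat.mem_divisors] at ha
  have ha0 : a ≠ 0 := fun h => hℓ (by simpa [h] using ha.1)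
  rw [← Finset.sum_filter, Finset.mul_sum]
  apply Finset.sum_nbij' (i := fun n => n / a) (j := fun b => a * b)
  · intro n hn
    simp only [Finset.mem_filter, Finset.mem_Icc] at hn
    obtain ⟨⟨hn1, hnM⟩, han⟩ := hn
    simp only [Finset.mem_Icc]
    constructor
    · exact Nat.one_le_div_iff (Nat.pos_of_ne_zero ha0) |>.mpr (Nat.le_of_dvd (by omega) han)
    · exact Nat.div_le_div_right hnM
  · intro b hb
    simp only [Finset.mem_Icc] at hb
    simp only [Finset.mem_filter, Finset.mem_Icc]
    refine ⟨⟨?_, ?_⟩, Dvd.intro b rfl⟩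
    · have := Nat.pos_of_ne_zero ha0; nlinarith [hb.1]
    · rw [Nat.mul_comm]
      exact (Nat.le_div_iff_mul_le (Nat.pos_of_ne_zero ha0)).mp hb.2
  · intro n hn
    simp only [Finset.mem_filter] at hn
    exact Nat.mul_div_cancel' hn.2
  · intro b hb
    exact Nat.mul_div_cancel_left b (Nat.pos_of_ne_zero ha0)
  · intro n hn
    simp only [Finset.mem_filter, Finset.mem_Icc] at hn
    obtain ⟨⟨hn1, hnM⟩, han⟩ := hn
    have hna0 : n / a ≠ 0 := by
      have := Nat.le_of_dvd (by omega) han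
      exact Nat.div_ne_zero_iff_of_dvd han |>.mpr ⟨by omega, ha0⟩
    rw [chiF_apply d hna0]
    obtain ⟨b, rfl⟩ := han
    rw [Nat.mul_div_cancel_left b (Nat.pos_of_ne_zero ha0)]
    push_cast
    have hb0' : b ≠ 0 := fun h => by simp [h] at hn1
    have hb0 : (b : ℂ) ≠ 0 := Nat.cast_ne_zero.mpr hb0'
    have haC : (a : ℂ) ≠ 0 := Nat.cast_ne_zero.mpr ha0
    field_simp

noncomputable def invIdF : ArithmeticFunction ℂ := ⟨fun n => ((n : ℂ))⁻¹, by simp⟩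

lemma invIdF_mult : IsMultiplicative invIdF := by
  constructor
  · simp [invIdF]
  · intro m n _
    show ((((m * n : ℕ)) : ℂ))⁻¹ = _
    push_cast
    rw [mul_inv]
    rfl

lemma const_eq (d : ℤ) {ℓ : ℕ} (hℓ : ℓ ≠ 0) :
    ∑ a ∈ ℓ.divisors, (hF d a / a) =
      (1 / (ℓ : ℂ)) * ∏ p ∈ ℓ.primeFactors,
        (1 + ((p : ℂ) - (kronecker d p : ℂ)) *
          ((p : ℂ) ^ (ℓ.factorization p) - 1) / ((p : ℂ) - 1)) := by
  have hsum : ∑ a ∈ ℓ.divisors, (hF d a / a) = ((hF d).pmul invIdF * ζ) ℓ := by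
    rw [coe_mul_zeta_apply]
    exact Finset.sum_congr rfl fun a _ => by rw [pmul_apply, div_eq_mul_inv]; rfl
  rw [hsum, ArithmeticFunction.IsMultiplicative.multiplicative_factorization _
    (((hF_mult d).pmul invIdF_mult).mul isMultiplicative_zeta.natCast) hℓ]
  rw [Finsupp.prod]
  rw [Nat.support_factorization]
  have hℓprod : (ℓ : ℂ) = ∏ p ∈ ℓ.primeFactors, (p : ℂ) ^ ℓ.factorization p := by
    conv_lhs => rw [← Nat.factorization_prod_pow_eq_self hℓ]
    rw [Finsupp.prod, Nat.support_factorization]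
    push_cast
    rfl
  rw [hℓprod, one_div, ← Finset.prod_inv_distrib, ← Finset.prod_mul_distrib]
  apply Finset.prod_congr rfl
  intro p hp
  have hpp : p.Prime := Nat.prime_of_mem_primeFactors hp
  have hp0 : p ≠ 0 := hpp.ne_zero
  set e := ℓ.factorization p with he
  set q : ℂ := (p : ℂ) with hq
  set c : ℂ := (kronecker d p : ℂ) with hc
  have hq0 : q ≠ 0 := Nat.cast_ne_zero.mpr hp0
  have hq1 : q ≠ 1 := by
    have h2 := hpp.two_le
    intro h
    rw [hq, show (1 : ℂ) = ((1 : ℕ) : ℂ) by norm_num] at h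
    have := Nat.cast_injective h
    omega
  -- compute LHS
  rw [coe_mul_zeta_apply, Nat.sum_divisors_prime_pow hpp]
  have hterm : ∀ x ∈ range (e + 1), ((hF d).pmul invIdF) (p ^ x) =
      (if x = 0 then 1 else 1 - c) * (q ^ x)⁻¹ := by
    intro x _
    rw [pmul_apply, hF_apply d (pow_ne_zero _ hp0)]
    have : invIdF (p ^ x) = (q ^ x)⁻¹ := by show (((p ^ x : ℕ) : ℂ))⁻¹ = _; push_cast; rfl
    rw [this]
    congr 1
    rcases Nat.eq_zero_or_pos x with rfl | hx0
    · simp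
    · rw [if_neg hx0.ne', Nat.primeFactors_pow _ hx0.ne', hpp.primeFactors, Finset.prod_singleton]
  rw [Finset.sum_congr rfl hterm, Finset.sum_range_succ']
  simp only [if_neg (Nat.succ_ne_zero _), if_pos rfl, if_true, pow_zero, inv_one, mul_one]
  have hstep : ∑ x ∈ range e, (1 - c) * (q ^ (x + 1))⁻¹ =
      (1 - c) * q⁻¹ * ∑ x ∈ range e, (q⁻¹) ^ x := by
    rw [Finset.mul_sum]
    exact Finset.sum_congr rfl fun x _ => by rw [pow_succ, mul_inv, inv_pow]; ring
  rw [hstep, geom_sum_eq (by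
    intro h
    exact hq1 (by rw [← inv_inv q, h, inv_one]))]
  have hqe0 : q ^ e ≠ 0 := pow_ne_zero _ hq0
  have hq1' : q - 1 ≠ 0 := sub_ne_zero.mpr hq1
  have hqi1 : q⁻¹ - 1 ≠ 0 := by
    intro h
    apply hq1
    have : q⁻¹ = 1 := by linear_combination h
    rw [← inv_inv q, this, inv_one]
  rw [inv_pow, div_eq_mul_inv, div_eq_mul_inv]
  rw [show q⁻¹ - 1 = (1 - q) * q⁻¹ by field_simp]
  rw [mul_inv, inv_inv]
  have h1q : (1 : ℂ) - q ≠ 0 := fun h => hq1 (by linear_combination -h)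
  field_simp
  ring


/-- Let `D = d·ℓ²` with `d` a fundamental discriminant, `ℓ > 0`, and
`D` not a perfect square. Then
`L(1, ψ_D) = L(1, ψ_d) · (1/ℓ) · ∏_{p ∣ ℓ} [1 + (p - ψ_d(p))(p^{ord_p ℓ} - 1)/(p - 1)]`,
where `ψ_D(n) = (d | n/gcd(n,ℓ))` and the values at `z = 1` are the limits of the
partial sums of the (conditionally convergent) Dirichlet series. -/
theorem LSeries_psiD_at_one (D d : ℤ) (ℓ : ℕ)
    (hd : IsFundamentalDiscriminant d) (hℓ : 0 < ℓ) (hdec : D = d * (ℓ : ℤ) ^ 2)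
    (hns : ¬IsSquare D) (Ld : ℂ)
    (hLd : Filter.Tendsto (fun M : ℕ => ∑ n ∈ Finset.Icc 1 M, (kronecker d n : ℂ) / n)
      Filter.atTop (nhds Ld)) :
    Filter.Tendsto
      (fun M : ℕ => ∑ n ∈ Finset.Icc 1 M, (kronecker d (n / n.gcd ℓ) : ℂ) / n)
      Filter.atTop
      (nhds (Ld * (1 / (ℓ : ℂ)) *
        ∏ p ∈ ℓ.primeFactors,
          (1 + ((p : ℂ) - (kronecker d p : ℂ)) *
            ((p : ℂ) ^ (ℓ.factorization p) - 1) / ((p : ℂ) - 1)))) := by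
  have hℓ0 : ℓ ≠ 0 := hℓ.ne'
  simp only [partial_sum_eq d hℓ0]
  have hval : Ld * (1 / (ℓ : ℂ)) *
      ∏ p ∈ ℓ.primeFactors,
        (1 + ((p : ℂ) - (kronecker d p : ℂ)) *
          ((p : ℂ) ^ (ℓ.factorization p) - 1) / ((p : ℂ) - 1)) =
      ∑ a ∈ ℓ.divisors, (hF d a / a) * Ld := by
    rw [← Finset.sum_mul, const_eq d hℓ0]; ring
  rw [hval]
  apply tendsto_finset_sum
  intro a ha
  have ha0 : a ≠ 0 := fun h => hℓ0 (by simpa [h] using (Nat.mem_divisors.mp ha).1)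
  have hdiv : Filter.Tendsto (fun M : ℕ => M / a) Filter.atTop Filter.atTop := by
    apply Filter.tendsto_atTop_atTop.mpr
    intro b
    exact ⟨a * b, fun M hM => (Nat.le_div_iff_mul_le (Nat.pos_of_ne_zero ha0)).mpr
      (by rw [Nat.mul_comm]; exact hM)⟩
  exact (hLd.comp hdiv).const_mul _
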